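/- Let S be a nonempty finite set, p ∈ ℕ, m : S → ℝ^{p×p} a family of matrices, and C a convex subset of the real p×p matrices containing m(s) for every s ∈ S. Let Ψ : ℝ^{p×p} → ℝ be convex on C, let w* : S → [0,1] be weights with Σ_{s∈S} w*_s = 1, and set M* := Σ_{s∈S} w*_s m(s). Assume Ψ is Fréchet differentiable at M* with derivative L, and let ε ≥ 0. If L(m(s) − M*) ≥ −ε for every s ∈ S, then for every weight function w : S → [0,1] with Σ_{s∈S} w_s = 1 one has Ψ(M*) ≤ Ψ(Σ_{s∈S} w_s m(s)) + ε. -/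

import Mathlib

open Matrix

attribute [local instance] Matrix.normedAddCommGroup Matrix.normedSpace

/-- ε-optimality certificate via the sensitivity function: if the convex design criterion
`Ψ` is differentiable at `M* = Σₛ w*ₛ m(s)` with derivative `L` and
`L (m s - M*) ≥ -ε` for all `s`, then the weighted design `w*` is ε-optimal. -/
theorem sensitivity_certificate_eps_optimality
    {S : Type*} [Fintype S] [Nonempty S] {p : ℕ}
    (m : S → Matrix (Fin p) (Fin p) ℝ)
    (C : Set (Matrix (Fin p) (Fin p) ℝ)) (hC : Convex ℝ C)
    (hmC : ∀ s, m s ∈ C)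
    (Ψ : Matrix (Fin p) (Fin p) ℝ → ℝ) (hΨ : ConvexOn ℝ C Ψ)
    (wstar : S → ℝ) (hwstar : ∀ s, wstar s ∈ Set.Icc (0 : ℝ) 1)
    (hwstarsum : ∑ s, wstar s = 1)
    (Mstar : Matrix (Fin p) (Fin p) ℝ) (hMstar : Mstar = ∑ s, wstar s • m s)
    (L : Matrix (Fin p) (Fin p) ℝ →L[ℝ] ℝ) (hL : HasFDerivAt Ψ L Mstar)
    (ε : ℝ) (hε : 0 ≤ ε)
    (hviol : ∀ s, -ε ≤ L (m s - Mstar)) :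
    ∀ w : S → ℝ, (∀ s, w s ∈ Set.Icc (0 : ℝ) 1) → ∑ s, w s = 1 →
      Ψ Mstar ≤ Ψ (∑ s, w s • m s) + ε := by
  intro w hw hwsum
  set M : Matrix (Fin p) (Fin p) ℝ := ∑ s, w s • m s with hM
  have hMstarC : Mstar ∈ C := by
    rw [hMstar]
    exact hC.sum_mem (fun s _ => (hwstar s).1) hwstarsum (fun s _ => hmC s)
  have hMC : M ∈ C := hC.sum_mem (fun s _ => (hw s).1) hwsum (fun s _ => hmC s)
  set d : Matrix (Fin p) (Fin p) ℝ := M - Mstar with hd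
  -- derivative of g(t) = Ψ (Mstar + t • d) at 0 is L d
  have hline : HasDerivAt (fun t : ℝ => Mstar + t • d) d 0 := by
    have := ((hasDerivAt_id (0 : ℝ)).smul_const d).const_add Mstar
    rw [one_smul] at this
    exact this
  have hg : HasDerivAt (fun t : ℝ => Ψ (Mstar + t • d)) (L d) 0 := by
    have hL' : HasFDerivAt Ψ L (Mstar + (0 : ℝ) • d) := by simpa using hL
    have := hL'.comp_hasDerivAt (0 : ℝ) hline
    exact this
  -- gradient inequality: L d ≤ Ψ M - Ψ Mstar
  have hgrad : L d ≤ Ψ M - Ψ Mstar := by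
    have htend : Filter.Tendsto (fun t : ℝ => (Ψ (Mstar + t • d) - Ψ Mstar) / t)
        (nhdsWithin 0 (Set.Ioi 0)) (nhds (L d)) := by
      have := hg.tendsto_slope_zero_right
      simpa [slope_def_field, div_eq_inv_mul] using this
    refine le_of_tendsto htend ?_
    filter_upwards [self_mem_nhdsWithin, Ioc_mem_nhdsGT_of_mem (by norm_num :
      (0:ℝ) ∈ Set.Ico 0 1)] with t ht ht1
    have ht0 : (0:ℝ) < t := ht
    have hconv : Ψ (Mstar + t • d) ≤ (1 - t) * Ψ Mstar + t * Ψ M := by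
      have := hΨ.2 hMstarC hMC (by linarith [ht1.2] : (0:ℝ) ≤ 1 - t) ht0.le
        (by ring : (1 - t) + t = 1)
      have heq : (1 - t) • Mstar + t • M = Mstar + t • d := by
        simp only [hd]; module
      rw [heq] at this
      simpa [smul_eq_mul] using this
    rw [div_le_iff₀ ht0]
    nlinarith [hconv]
  -- linearity: L d ≥ -ε
  have hLd : -ε ≤ L d := by
    have hdsum : d = ∑ s, w s • (m s - Mstar) := by
      simp only [smul_sub, Finset.sum_sub_distrib, ← Finset.sum_smul, hwsum, one_smul,
        hd, hM]
    have : L d = ∑ s, w s * L (m s - Mstar) := by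
      rw [hdsum]
      simp [map_sum, smul_eq_mul]
    rw [this]
    calc -ε = ∑ s, w s * (-ε) := by rw [← Finset.sum_mul, hwsum, one_mul]
    _ ≤ ∑ s, w s * L (m s - Mstar) :=
      Finset.sum_le_sum fun s _ => mul_le_mul_of_nonneg_left (hviol s) (hw s).1
  linarith
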